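/- Let A be a unital Banach algebra and let a ∈ A be invertible with countable spectrum. Then a lies in the connected component of the identity in the group of invertible elements of A. -/
import Mathlib

open Complex Set

/-- **Lemma 3.2.** Let `A` be a unital Banach algebra and let `a ∈ A` be invertible with
countable spectrum. Then `a` lies in the connected component of the identity in the group
of invertible elements of `A`. -/
theorem invertible_countable_spectrum_mem_identity_component
    {A : Type*} [NormedRing A] [NormedAlgebra ℂ A] [CompleteSpace A]
    (a : A) (ha : IsUnit a) (hcount : (spectrum ℂ a).Countable) :
    a ∈ connectedComponentIn {x : A | IsUnit x} 1 := by
  -- choose a direction θ ∈ (0, π) avoiding all arguments of spectrum points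
  have hIoo : ¬ (Set.Ioo (0:ℝ) Real.pi).Countable := by
    intro h
    have := h.le_aleph0
    rw [Cardinal.mk_Ioo_real Real.pi_pos] at this
    exact absurd this (not_le.mpr Cardinal.aleph0_lt_continuum)
  have hB : (Complex.arg '' spectrum ℂ a).Countable := hcount.image _
  obtain ⟨θ, hθmem, hθB⟩ : ∃ θ ∈ Set.Ioo (0:ℝ) Real.pi, θ ∉ Complex.arg '' spectrum ℂ a := by
    by_contra h
    push_neg at h
    exact hIoo (hB.mono h)
  set w : ℂ := Complex.exp (θ * Complex.I) with hw
  have hw0 : w ≠ 0 := Complex.exp_ne_zero _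
  have hθIoc : θ ∈ Set.Ioc (-Real.pi) Real.pi :=
    ⟨lt_trans (neg_neg_of_pos Real.pi_pos) hθmem.1, le_of_lt hθmem.2⟩
  have hargw : Complex.arg w = θ := by
    rw [hw, Complex.exp_mul_I]
    exact Complex.arg_cos_add_sin_mul_I hθIoc
  have hwim : w.im = Real.sin θ := by
    rw [hw, Complex.exp_mul_I]; simp [Complex.sin_ofReal_re]
  have hsin : 0 < Real.sin θ := Real.sin_pos_of_pos_of_lt_pi hθmem.1 hθmem.2
  -- the ray through w avoids the spectrum
  have hray : ∀ t : ℝ, 0 ≤ t → (t : ℂ) * w ∉ spectrum ℂ a := by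
    intro t ht hmem
    rcases eq_or_lt_of_le ht with h0 | h0
    · rw [← h0] at hmem
      simp only [ofReal_zero, zero_mul] at hmem
      exact (spectrum.zero_notMem_iff ℂ).mpr ha hmem
    · apply hθB
      refine ⟨(t : ℂ) * w, hmem, ?_⟩
      rw [Complex.arg_real_mul w h0, hargw]
  -- the path
  set q : ℝ → A := fun s => ((1 - (s : ℂ) - s * w)⁻¹) • (((1 : ℂ) - s) • a - ((s : ℂ) * w) • (1 : A)) with hq
  -- the scalar denominator never vanishes on [0,1]
  have hden : ∀ s ∈ Set.Icc (0:ℝ) 1, (1 - (s : ℂ) - s * w) ≠ 0 := by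
    intro s hs h
    have him : (1 - (s : ℂ) - s * w).im = -(s * w.im) := by simp
    rw [h] at him
    have : s * w.im = 0 := by simpa using him.symm
    have hs0 : s = 0 := by
      rcases mul_eq_zero.mp this with h' | h'
      · exact h'
      · exact absurd h' (by rw [hwim]; exact ne_of_gt hsin)
    rw [hs0] at h
    simp at h
  -- the numerator is always a unit on [0,1]
  have hnum : ∀ s ∈ Set.Icc (0:ℝ) 1, IsUnit (((1 : ℂ) - s) • a - ((s : ℂ) * w) • (1 : A)) := by
    intro s hs
    rcases eq_or_lt_of_le hs.2 with h1 | h1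
    · -- s = 1
      subst h1
      simp only [ofReal_one, sub_self, zero_smul, zero_sub, one_mul]
      rw [← Algebra.algebraMap_eq_smul_one]
      exact ((isUnit_iff_ne_zero.mpr hw0).map (algebraMap ℂ A)).neg
    · -- s < 1
      have hc : (1 : ℂ) - s ≠ 0 := by
        intro h
        have : (s : ℂ) = 1 := by linear_combination -h
        exact absurd (by exact_mod_cast this) (ne_of_lt h1)
      have ht : (0:ℝ) ≤ s / (1 - s) := div_nonneg hs.1 (by linarith [h1])
      have hz := hray _ ht
      have hzeq : ((s / (1 - s) : ℝ) : ℂ) = (s : ℂ) / (1 - s) := by push_cast; ring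
      rw [spectrum.notMem_iff] at hz
      have hz' : IsUnit (a - (((s : ℂ) / (1 - s)) * w) • (1 : A)) := by
        have := hz.neg
        rw [Algebra.algebraMap_eq_smul_one, neg_sub, hzeq] at this
        exact this
      have key : ((1 : ℂ) - s) • a - ((s : ℂ) * w) • (1 : A)
          = (Units.mk0 ((1:ℂ) - s) hc) • (a - (((s : ℂ) / (1 - s)) * w) • (1 : A)) := by
        rw [Units.smul_def, Units.val_mk0, smul_sub, smul_smul]
        congr 1
        congr 1
        field_simp
      rw [key]
      exact IsUnit.smul _ hz'
  -- q is continuous on [0,1]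
  have hcont : ContinuousOn q (Set.Icc (0:ℝ) 1) := by
    apply ContinuousOn.smul
    · apply ContinuousOn.inv₀ _ hden
      fun_prop
    · fun_prop
  -- endpoints
  have hq0 : q 0 = a := by simp [hq]
  have hq1 : q 1 = 1 := by
    simp only [hq, ofReal_one, sub_self, zero_smul, one_mul, zero_sub, smul_neg]
    rw [smul_smul, ← neg_smul, show -((-w)⁻¹ * w) = (1:ℂ) by field_simp, one_smul]
  -- conclude
  have hpre : IsPreconnected (q '' Set.Icc (0:ℝ) 1) :=
    (isPreconnected_Icc).image _ hcont
  have hsub : q '' Set.Icc (0:ℝ) 1 ⊆ {x : A | IsUnit x} := by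
    rintro _ ⟨s, hs, rfl⟩
    have := IsUnit.smul (Units.mk0 _ (inv_ne_zero (hden s hs))) (hnum s hs)
    rwa [Units.smul_def, Units.val_mk0] at this
  have h1mem : (1 : A) ∈ q '' Set.Icc (0:ℝ) 1 :=
    ⟨1, ⟨zero_le_one, le_refl 1⟩, hq1⟩
  have := hpre.subset_connectedComponentIn h1mem hsub
  exact this ⟨0, ⟨le_refl 0, zero_le_one⟩, hq0⟩
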